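/- Let E be a finite-dimensional real inner product space, τ > 0 and z ∈ E. Then the infimum over w ∈ E of (1/2)·‖w − z‖² + τ·‖w‖ equals (1/2)·‖z‖² if ‖z‖ ≤ τ, and equals τ·‖z‖ − τ²/2 if ‖z‖ > τ. -/

import Mathlib

open RealInnerProductSpace


/-- The optimal value of the group-lasso proximal subproblem: the infimum over `w`
of `(1/2)‖w - z‖² + τ‖w‖` equals `(1/2)‖z‖²` if `‖z‖ ≤ τ` and `τ‖z‖ - τ²/2`
otherwise. -/
theorem blockSoftThresh_infValue {E : Type*} [NormedAddCommGroup E]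
    [InnerProductSpace ℝ E] [FiniteDimensional ℝ E] (τ : ℝ) (hτ : 0 < τ) (z : E) :
    IsGLB (Set.range fun w : E => (1 / 2) * ‖w - z‖ ^ 2 + τ * ‖w‖)
      (if ‖z‖ ≤ τ then (1 / 2) * ‖z‖ ^ 2 else τ * ‖z‖ - τ ^ 2 / 2) := by
  set v : ℝ := if ‖z‖ ≤ τ then (1 / 2) * ‖z‖ ^ 2 else τ * ‖z‖ - τ ^ 2 / 2 with hv
  have hlb : ∀ w : E, v ≤ (1 / 2) * ‖w - z‖ ^ 2 + τ * ‖w‖ := by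
    intro w
    have hcs : (inner ℝ w z : ℝ) ≤ ‖w‖ * ‖z‖ := real_inner_le_norm w z
    have hsq : ‖w - z‖ ^ 2 = ‖w‖ ^ 2 - 2 * (inner ℝ w z : ℝ) + ‖z‖ ^ 2 :=
      norm_sub_sq_real w z
    have hw0 : (0:ℝ) ≤ ‖w‖ := norm_nonneg w
    rw [hv]
    split_ifs with h
    · nlinarith [sq_nonneg (‖w‖ - ‖z‖ + τ), sq_nonneg ‖w‖]
    · nlinarith [sq_nonneg (‖w‖ - ‖z‖ + τ)]
  have hmem : v ∈ Set.range fun w : E => (1 / 2) * ‖w - z‖ ^ 2 + τ * ‖w‖ := by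
    rw [hv]
    split_ifs with h
    · exact ⟨0, by simp⟩
    · push_neg at h
      have hz : (0:ℝ) < ‖z‖ := lt_trans hτ h
      refine ⟨(1 - τ / ‖z‖) • z, ?_⟩
      have h1 : (1 - τ / ‖z‖) • z - z = (-(τ / ‖z‖)) • z := by
        rw [sub_smul, one_smul, neg_smul]; abel
      have hnn : (0:ℝ) ≤ 1 - τ / ‖z‖ := by
        rw [sub_nonneg, div_le_one hz]; exact le_of_lt h
      have h2 : ‖(1 - τ / ‖z‖) • z - z‖ = τ := by
        rw [h1, norm_smul, Real.norm_eq_abs, abs_neg, abs_of_nonneg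
          (div_nonneg hτ.le hz.le), div_mul_cancel₀ _ hz.ne']
      have h3 : ‖(1 - τ / ‖z‖) • z‖ = ‖z‖ - τ := by
        rw [norm_smul, Real.norm_eq_abs, abs_of_nonneg hnn, sub_mul, one_mul,
          div_mul_cancel₀ _ hz.ne']
      simp only []
      show 1 / 2 * ‖(1 - τ / ‖z‖) • z - z‖ ^ 2 + τ * ‖(1 - τ / ‖z‖) • z‖ = τ * ‖z‖ - τ ^ 2 / 2
      rw [h2, h3]; ring
  exact ⟨fun x hx => by obtain ⟨w, rfl⟩ := hx; exact hlb w, fun b hb => hb hmem⟩
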